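/- arXiv:1801.04793 — 2 statements merged into one kernel-verified Lean document; each statement's English description precedes it below -/
import Mathlib

section
/- Let x ∈ ℝ^n with |x| ≥ 1 and let |y| ≤ |x|/2. Then the Taylor remainder R(x,y) = ∫_{|x|^2}^{|x+y|^2} (1+ρ)^{−q/2−2}(|x+y|^2 − ρ) dρ satisfies |R(x,y)| ≤ 2^{q+2}·25·⟨x⟩^{−q−4}|x|^2|y|^2 for any q > 0. -/
open MeasureTheory

theorem taylor_remainder_far_bound (n : ℕ) (q : ℝ) (hq : 0 < q)
    (x y : EuclideanSpace ℝ (Fin n)) (hx : 1 ≤ ‖x‖) (hy : ‖y‖ ≤ ‖x‖ / 2) :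
    |∫ ρ in (‖x‖ ^ 2)..(‖x + y‖ ^ 2), (1 + ρ) ^ (-q/2 - 2) * (‖x + y‖ ^ 2 - ρ)| ≤
      (2:ℝ) ^ (q + 2) * 25 * (1 + ‖x‖ ^ 2) ^ ((-q - 4)/2) * ‖x‖ ^ 2 * ‖y‖ ^ 2 := by
  have hx0 : (0:ℝ) < ‖x‖ := lt_of_lt_of_le one_pos hx
  have hy0 : (0:ℝ) ≤ ‖y‖ := norm_nonneg y
  set a := ‖x‖ ^ 2 with ha
  set b := ‖x + y‖ ^ 2 with hb
  have hsq : b = a + 2 * inner ℝ x y + ‖y‖ ^ 2 := norm_add_sq_real x y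
  have hinner : |(inner ℝ x y : ℝ)| ≤ ‖x‖ * ‖y‖ := abs_real_inner_le_norm x y
  have hdiff : |b - a| ≤ 5/2 * (‖x‖ * ‖y‖) := by
    rw [hsq, abs_le]
    have h2 := abs_le.mp hinner
    constructor
    · nlinarith [sq_nonneg ‖y‖]
    · nlinarith [mul_le_mul_of_nonneg_right hy hy0]
  have hblo : ‖x‖ ^ 2 / 4 ≤ b := by
    have h1 : ‖x‖ ≤ ‖x + y‖ + ‖y‖ := by
      have := norm_sub_le (x + y) y
      simpa using this
    nlinarith [norm_nonneg (x+y)]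
  have halo : ‖x‖ ^ 2 / 4 ≤ a := by nlinarith
  set P := (1 + ‖x‖ ^ 2) ^ ((-q - 4)/2) with hP
  have hPpos : 0 < P := Real.rpow_pos_of_pos (by positivity) _
  have hkey : ((1 + ‖x‖ ^ 2)/4) ^ (-q/2 - 2) = 2 ^ (q + 4) * P := by
    have hs : (0:ℝ) ≤ 1 + ‖x‖ ^ 2 := by positivity
    rw [Real.div_rpow hs (by norm_num), div_eq_mul_inv,
      ← Real.rpow_neg (by norm_num : (0:ℝ) ≤ 4), mul_comm]
    congr 1
    · have h4 : (4:ℝ) = (2:ℝ) ^ (2:ℝ) := by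
        rw [show ((2:ℝ):ℝ) = ((2:ℕ):ℝ) by norm_num, Real.rpow_natCast]; norm_num
      rw [h4, ← Real.rpow_mul (by norm_num : (0:ℝ) ≤ 2)]
      ring_nf
    · rw [hP]; congr 1; ring
  set C := 2 ^ (q + 4) * P * (5/2 * (‖x‖ * ‖y‖)) with hC
  have hbound : ∀ ρ ∈ Set.uIoc a b, ‖(1 + ρ) ^ (-q/2 - 2) * (b - ρ)‖ ≤ C := by
    intro ρ hρ
    have hρlo : ‖x‖ ^ 2 / 4 ≤ ρ := le_trans (le_min halo hblo) hρ.1.le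
    have h1ρ : (0:ℝ) < 1 + ρ := by nlinarith
    have hquarter : (1 + ‖x‖ ^ 2)/4 ≤ 1 + ρ := by nlinarith
    have hpow : (1 + ρ) ^ (-q/2 - 2) ≤ ((1 + ‖x‖ ^ 2)/4) ^ (-q/2 - 2) :=
      Real.rpow_le_rpow_of_nonpos (by positivity) hquarter (by linarith)
    have hbres : |b - ρ| ≤ |b - a| := by
      rcases le_total a b with h | h
      · rw [Set.uIoc_of_le h] at hρ
        rw [abs_of_nonneg (by linarith [hρ.2]), abs_of_nonneg (by linarith)]
        linarith [hρ.1]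
      · rw [Set.uIoc_of_ge h] at hρ
        rw [abs_of_nonpos (by linarith [hρ.1]), abs_of_nonpos (by linarith)]
        linarith [hρ.2]
    rw [norm_mul, Real.norm_eq_abs, Real.norm_eq_abs,
      abs_of_pos (Real.rpow_pos_of_pos h1ρ _), hC]
    calc (1 + ρ) ^ (-q/2 - 2) * |b - ρ|
        ≤ ((1 + ‖x‖ ^ 2)/4) ^ (-q/2 - 2) * (5/2 * (‖x‖ * ‖y‖)) := by
          apply mul_le_mul hpow (hbres.trans hdiff) (abs_nonneg _)
          positivity
      _ = 2 ^ (q + 4) * P * (5/2 * (‖x‖ * ‖y‖)) := by rw [hkey]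
  have hint := intervalIntegral.norm_integral_le_of_norm_le_const hbound
  rw [Real.norm_eq_abs] at hint
  have h24 : (2:ℝ) ^ (q + 4) = 4 * 2 ^ (q + 2) := by
    rw [show q + 4 = (q + 2) + 2 by ring, Real.rpow_add (by norm_num)]
    norm_num [mul_comm]
  calc |∫ ρ in a..b, (1 + ρ) ^ (-q/2 - 2) * (b - ρ)| ≤ C * |b - a| := hint
    _ ≤ C * (5/2 * (‖x‖ * ‖y‖)) := by
        apply mul_le_mul_of_nonneg_left hdiff
        rw [hC]; positivity
    _ = 2 ^ (q + 2) * 25 * P * ‖x‖ ^ 2 * ‖y‖ ^ 2 := by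
        rw [hC, h24]; ring
end

section
/- Let q > n > 0 and x ∈ ℝ^n with |x| ≥ 1. Then ∫_{|x|/2 ≤ |y| ≤ 2|x|} ⟨x+y⟩^{−q} |y|^{−n−1} dy ≤ 2^{q/2+n+1} ω_n (q−n)^{−1} |x|^{−n−1}. -/
open MeasureTheory

open Real Set Module in
lemma radial_aux (n : ℕ) (hn : 0 < n) (q : ℝ) (hq : (n:ℝ) < q) :
    ∫ r in Ioi (0:ℝ), r ^ (n - 1) * (1 + r) ^ (-q) ≤ (q - (n:ℝ))⁻¹ := by
  have hp : (n:ℝ) - 1 - q < -1 := by linarith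
  have hpre : (fun y => (1:ℝ) + y) ⁻¹' Ioi 1 = Ioi 0 := by
    ext y; simp [lt_add_iff_pos_right]
  have key : ∫ r in Ioi (0:ℝ), (1 + r) ^ ((n:ℝ) - 1 - q) = (q - (n:ℝ))⁻¹ := by
    have h := (measurePreserving_add_left (volume : Measure ℝ) 1).setIntegral_preimage_emb
      (measurableEmbedding_addLeft 1) (fun t => t ^ ((n:ℝ) - 1 - q)) (Ioi (1:ℝ))
    rw [hpre] at h
    rw [h, integral_Ioi_rpow_of_lt hp one_pos, Real.one_rpow, inv_eq_one_div,
      div_eq_div_iff (by linarith) (by linarith)]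
    ring
  rw [← key]
  apply integral_mono_of_nonneg
  · filter_upwards [ae_restrict_mem measurableSet_Ioi] with r (hr : 0 < r)
    positivity
  · have := ((measurePreserving_add_left (volume : Measure ℝ) 1).integrableOn_comp_preimage
      (measurableEmbedding_addLeft 1)
      (f := fun t => t ^ ((n:ℝ) - 1 - q)) (s := Ioi 1)).mpr
      (integrableOn_Ioi_rpow_of_lt hp one_pos)
    rwa [hpre] at this
  · filter_upwards [ae_restrict_mem measurableSet_Ioi] with r (hr : 0 < r)
    have h1 : r ^ (n - 1) ≤ (1 + r) ^ (n - 1) := by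
      apply pow_le_pow_left₀ hr.le; linarith
    calc r ^ (n - 1) * (1 + r) ^ (-q) ≤ (1 + r) ^ (n - 1) * (1 + r) ^ (-q) :=
          mul_le_mul_of_nonneg_right h1 (by positivity)
      _ = (1 + r) ^ ((n:ℝ) - 1 - q) := by
          rw [← Real.rpow_natCast (1 + r) (n - 1), ← Real.rpow_add (by positivity)]
          congr 1
          rw [Nat.cast_sub hn, Nat.cast_one]
          ring

theorem middle_region_bound (n : ℕ) (hn : 0 < n) (q : ℝ) (hq : (n:ℝ) < q)
    (x : EuclideanSpace ℝ (Fin n)) (hx : 1 ≤ ‖x‖) :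
    ∫ y in {y : EuclideanSpace ℝ (Fin n) | ‖x‖ / 2 ≤ ‖y‖ ∧ ‖y‖ ≤ 2 * ‖x‖},
        (1 + ‖x + y‖ ^ 2) ^ (-q/2) * ‖y‖ ^ (-(n:ℝ) - 1) ≤
      (2:ℝ) ^ (q/2 + n + 1) *
        (n * (volume (Metric.ball (0 : EuclideanSpace ℝ (Fin n)) 1)).toReal) *
        (q - (n:ℝ))⁻¹ * ‖x‖ ^ (-(n:ℝ) - 1) := by
  have hq0 : 0 < q := lt_of_le_of_lt (Nat.cast_nonneg n) hq
  have hx0 : 0 < ‖x‖ := lt_of_lt_of_le one_pos hx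
  haveI : Nonempty (Fin n) := Fin.pos_iff_nonempty.mp hn
  have hfr : Module.finrank ℝ (EuclideanSpace ℝ (Fin n)) = n := finrank_euclideanSpace_fin
  set e : ℝ := -(n:ℝ) - 1 with he
  have he0 : e ≤ 0 := by rw [he]; push_cast; linarith [Nat.cast_nonneg (α := ℝ) n]
  set C : ℝ := 2 ^ (q/2 + (n:ℝ) + 1) * ‖x‖ ^ e with hC
  have hC0 : 0 ≤ C := by positivity
  set h : EuclideanSpace ℝ (Fin n) → ℝ := fun y => (1 + ‖x + y‖) ^ (-q) with hh
  have hh0 : ∀ y, 0 ≤ h y := fun y => by rw [hh]; positivity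
  have hgint : Integrable (fun z : EuclideanSpace ℝ (Fin n) => (1 + ‖z‖) ^ (-q)) volume :=
    integrable_one_add_norm (by rw [hfr]; exact hq)
  have hint : Integrable h volume := by
    rw [hh]
    exact hgint.comp_add_left x
  have hsplit : (2:ℝ) ^ (q/2 + (n:ℝ) + 1) = 2 ^ (q/2) * 2 ^ (-e) := by
    rw [← Real.rpow_add two_pos]
    congr 1
    rw [he]; ring
  have hS : MeasurableSet {y : EuclideanSpace ℝ (Fin n) | ‖x‖ / 2 ≤ ‖y‖ ∧ ‖y‖ ≤ 2 * ‖x‖} :=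
    (measurableSet_le measurable_const measurable_norm).inter
      (measurableSet_le measurable_norm measurable_const)
  have key : ∀ y ∈ {y : EuclideanSpace ℝ (Fin n) | ‖x‖ / 2 ≤ ‖y‖ ∧ ‖y‖ ≤ 2 * ‖x‖},
      (1 + ‖x + y‖ ^ 2) ^ (-q/2) * ‖y‖ ^ e ≤ C * h y := by
    rintro y ⟨hy1, _⟩
    have h1 : (1 + ‖x + y‖ ^ 2) ^ (-q/2) ≤ 2 ^ (q/2) * (1 + ‖x + y‖) ^ (-q) :=
      rpow_neg_one_add_norm_sq_le (x + y) hq0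
    have h2 : ‖y‖ ^ e ≤ 2 ^ (-e) * ‖x‖ ^ e := by
      have hb : ‖y‖ ^ e ≤ (‖x‖ / 2) ^ e :=
        Real.rpow_le_rpow_of_nonpos (by positivity) hy1 he0
      have hc : (‖x‖ / 2) ^ e = 2 ^ (-e) * ‖x‖ ^ e := by
        rw [Real.div_rpow hx0.le (by norm_num), div_eq_mul_inv,
          ← Real.rpow_neg (by norm_num), mul_comm]
      rw [← hc]; exact hb
    calc (1 + ‖x + y‖ ^ 2) ^ (-q/2) * ‖y‖ ^ e
        ≤ (2 ^ (q/2) * (1 + ‖x + y‖) ^ (-q)) * (2 ^ (-e) * ‖x‖ ^ e) :=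
          mul_le_mul h1 h2 (by positivity) (by positivity)
      _ = C * h y := by rw [hC, hh, hsplit]; ring
  calc ∫ y in {y : EuclideanSpace ℝ (Fin n) | ‖x‖ / 2 ≤ ‖y‖ ∧ ‖y‖ ≤ 2 * ‖x‖},
        (1 + ‖x + y‖ ^ 2) ^ (-q/2) * ‖y‖ ^ e
      ≤ ∫ y in {y : EuclideanSpace ℝ (Fin n) | ‖x‖ / 2 ≤ ‖y‖ ∧ ‖y‖ ≤ 2 * ‖x‖}, C * h y := by
        apply integral_mono_of_nonneg
        · exact Filter.Eventually.of_forall fun y => by positivity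
        · exact ((hint.const_mul C).restrict)
        · filter_upwards [ae_restrict_mem hS] with y hy
          exact key y hy
    _ ≤ ∫ y, C * h y :=
        setIntegral_le_integral (hint.const_mul C)
          (Filter.Eventually.of_forall fun y => mul_nonneg hC0 (hh0 y))
    _ = C * ∫ y, h y := integral_const_mul C h
    _ = C * ∫ z : EuclideanSpace ℝ (Fin n), (1 + ‖z‖) ^ (-q) := by
        congr 1
        exact integral_add_left_eq_self x (f := fun z : EuclideanSpace ℝ (Fin n) => (1 + ‖z‖) ^ (-q))
    _ = C * ((n : ℝ) * (volume (Metric.ball (0 : EuclideanSpace ℝ (Fin n)) 1)).toReal *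
          ∫ r in Set.Ioi (0:ℝ), r ^ (n - 1) * (1 + r) ^ (-q)) := by
        rw [integral_fun_norm_addHaar volume (fun r => (1 + r) ^ (-q))]
        simp only [hfr, nsmul_eq_mul, smul_eq_mul, measureReal_def]
        ring
    _ ≤ C * ((n : ℝ) * (volume (Metric.ball (0 : EuclideanSpace ℝ (Fin n)) 1)).toReal *
          (q - (n:ℝ))⁻¹) := by
        apply mul_le_mul_of_nonneg_left _ hC0
        apply mul_le_mul_of_nonneg_left (radial_aux n hn q hq) (by positivity)
    _ = (2:ℝ) ^ (q/2 + n + 1) *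
        (n * (volume (Metric.ball (0 : EuclideanSpace ℝ (Fin n)) 1)).toReal) *
        (q - (n:ℝ))⁻¹ * ‖x‖ ^ e := by rw [hC]; ring
end
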